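/- If M is a reduced, projective, Rad-supplementing left R-module, then Rad M is small in M. -/

import Mathlib

universe u v

/-- The radical of a module: the intersection of all maximal submodules. -/
def moduleRad (R : Type u) [Ring R] (M : Type v) [AddCommGroup M] [Module R M] :
    Submodule R M :=
  sInf {m : Submodule R M | IsCoatom m}

/-- `V` is a Rad-supplement of `U` in the ambient module: `U + V = ⊤` and
`U ⊓ V ≤ Rad V` (viewed inside the ambient module). -/
def IsRadSupplementOf (R : Type u) [Ring R] {N : Type v} [AddCommGroup N] [Module R N]
    (U V : Submodule R N) : Prop :=
  U ⊔ V = ⊤ ∧ U ⊓ V ≤ Submodule.map V.subtype (moduleRad R V)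

/-- `M` is Rad-supplementing: in every module containing it (i.e. every embedding into a
module `N`), its image has a Rad-supplement. -/
def IsRadSupplementing (R : Type u) [Ring R] (M : Type v) [AddCommGroup M] [Module R M] :
    Prop :=
  ∀ (N : ModuleCat.{v} R) (f : M →ₗ[R] N), Function.Injective f →
    ∃ V : Submodule R N, IsRadSupplementOf R (LinearMap.range f) V

section auxRad

universe w w'

variable {R : Type u} [Ring R]

/-- Functoriality of the module radical. -/
theorem map_moduleRad_le {A : Type w} [AddCommGroup A] [Module R A]
    {B : Type w'} [AddCommGroup B] [Module R B] (φ : A →ₗ[R] B) :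
    Submodule.map φ (moduleRad R A) ≤ moduleRad R B := by
  refine le_sInf ?_
  intro K hK
  rw [Submodule.map_le_iff_le_comap]
  by_cases hc : Submodule.comap φ K = ⊤
  · rw [hc]; exact le_top
  · refine sInf_le ?_
    refine ⟨hc, ?_⟩
    intro b hb
    obtain ⟨a, hab, hanK⟩ := SetLike.exists_of_lt hb
    have hKb : K ⊔ Submodule.map φ b = ⊤ := by
      refine hK.2 _ (lt_of_le_of_ne le_sup_left ?_)
      intro hEq
      apply hanK
      have : φ a ∈ K ⊔ Submodule.map φ b :=
        (le_sup_right : Submodule.map φ b ≤ K ⊔ Submodule.map φ b)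
          (Submodule.mem_map_of_mem hab)
      rw [← hEq] at this
      exact this
    rw [eq_top_iff]
    intro x _
    have hx : φ x ∈ K ⊔ Submodule.map φ b := by rw [hKb]; trivial
    obtain ⟨k, hk, y, hy, hsum⟩ := Submodule.mem_sup.1 hx
    obtain ⟨b', hb', rfl⟩ := hy
    have hxb' : x - b' ∈ Submodule.comap φ K := by
      simp only [Submodule.mem_comap, map_sub]
      have : φ x - φ b' = k := by rw [← hsum]; abel
      rw [this]; exact hk
    have : x - b' ∈ b := hb.le hxb'
    have := b.add_mem this hb'
    simpa using this

theorem moduleRad_eq_top_of_surjective {A : Type w} [AddCommGroup A] [Module R A]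
    {B : Type w'} [AddCommGroup B] [Module R B] (φ : A →ₗ[R] B)
    (hφ : Function.Surjective φ) (hA : moduleRad R A = ⊤) : moduleRad R B = ⊤ := by
  rw [eq_top_iff]
  calc (⊤ : Submodule R B) = Submodule.map φ ⊤ := by
        rw [Submodule.map_top, LinearMap.range_eq_top.2 hφ]
    _ = Submodule.map φ (moduleRad R A) := by rw [hA]
    _ ≤ moduleRad R B := map_moduleRad_le φ

variable {M : Type v} [AddCommGroup M] [Module R M]

/-- Key induction: a finitely-supported solution of the triangular system is zero. -/
theorem rel_lemma (r : M →ₗ[R] M) :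
    ∀ K : ℕ, ∀ ψ : ℕ → M, ψ 0 = r (ψ 0) →
      (∀ k, k < K → ψ (k+1) = r (ψ (k+1)) - r (ψ k)) → r (ψ K) = 0 →
      ∀ k, k ≤ K → ψ k = 0 := by
  intro K
  induction K with
  | zero =>
    intro ψ h0 _ htop k hk
    interval_cases k
    rw [h0, htop]
  | succ K ih =>
    intro ψ h0 hmid htop
    set χ : ℕ → M := fun k => ∑ i ∈ Finset.range (k+1), ψ i with hχ
    have hχ0 : χ 0 = ψ 0 := by simp [hχ]
    have hχsucc : ∀ k, χ (k+1) = χ k + ψ (k+1) := by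
      intro k; simp [hχ, Finset.sum_range_succ]
    have hi : ∀ k, k ≤ K + 1 → χ k = r (ψ k) := by
      intro k
      induction k with
      | zero => intro _; rw [hχ0]; exact h0
      | succ k ihk =>
        intro hk
        have hk' : k ≤ K + 1 := Nat.le_of_succ_le hk
        have hklt : k < K + 1 := Nat.lt_of_succ_le hk
        rw [hχsucc, ihk hk']
        nth_rewrite 1 [hmid k hklt]
        abel
    have hχhead : χ 0 = r (χ 0) := by
      rw [hχ0]; exact h0
    have hχmid : ∀ k, k < K → χ (k+1) = r (χ (k+1)) - r (χ k) := by
      intro k hk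
      have h1 : χ (k+1) = r (ψ (k+1)) := hi (k+1) (by omega)
      have h2 : χ k = r (ψ k) := hi k (by omega)
      rw [h1, h2]
      have := congrArg r (hmid k (by omega))
      rw [map_sub] at this
      exact this
    have hχtop : r (χ K) = 0 := by
      have h1 : χ K = r (ψ K) := hi K (by omega)
      rw [h1]
      have := congrArg r (hmid K (by omega))
      rw [map_sub] at this
      rw [htop, map_zero, zero_sub] at this
      exact neg_eq_zero.mp this.symm
    have hχzero : ∀ k, k ≤ K → χ k = 0 := ih χ hχhead hχmid hχtop
    intro k hk
    have hψ : ∀ j, j ≤ K → ψ j = 0 := by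
      intro j hj
      cases j with
      | zero => rw [← hχ0]; exact hχzero 0 (by omega)
      | succ j =>
        have h1 := hχsucc j
        rw [hχzero (j+1) hj, hχzero j (by omega)] at h1
        simpa using h1.symm
    rcases Nat.lt_or_ge k (K+1) with h | h
    · exact hψ k (by omega)
    · have hkeq : k = K + 1 := by omega
      subst hkeq
      have h1 := hmid K (by omega)
      rw [hψ K (by omega), map_zero, htop] at h1
      simpa using h1

variable (t r : M →ₗ[R] M)

/-- Shift a finitely supported sequence one slot to the right. -/
noncomputable def shiftF : (ℕ →₀ M) →ₗ[R] (ℕ →₀ M) := Finsupp.lmapDomain M R Nat.succ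

/-- The Bass-style endomorphism: diagonal `t` plus shifted `r`. -/
noncomputable def alphaStar : (ℕ →₀ M) →ₗ[R] (ℕ →₀ M) :=
  Finsupp.mapRange.linearMap t + (shiftF).comp (Finsupp.mapRange.linearMap r)

theorem shiftF_single (a : ℕ) (m : M) :
    shiftF (R := R) (Finsupp.single a m) = Finsupp.single (a+1) m := by
  simp [shiftF, Finsupp.lmapDomain_apply, Finsupp.mapDomain_single]

theorem shiftF_apply_zero (ξ : ℕ →₀ M) : shiftF (R := R) ξ 0 = 0 := by
  rw [shiftF, Finsupp.lmapDomain_apply]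
  apply Finsupp.mapDomain_notin_range
  rintro ⟨n, hn⟩
  exact Nat.succ_ne_zero n hn

theorem shiftF_apply_succ (ξ : ℕ →₀ M) (k : ℕ) : shiftF (R := R) ξ (k+1) = ξ k := by
  rw [shiftF, Finsupp.lmapDomain_apply]
  exact Finsupp.mapDomain_apply Nat.succ_injective ξ k

theorem alphaStar_single (a : ℕ) (m : M) :
    alphaStar t r (Finsupp.single a m) =
      Finsupp.single a (t m) + Finsupp.single (a+1) (r m) := by
  simp [alphaStar, shiftF_single, Finsupp.mapRange_single]

theorem alphaStar_apply_zero (ξ : ℕ →₀ M) : alphaStar t r ξ 0 = t (ξ 0) := by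
  simp [alphaStar, shiftF_apply_zero, Finsupp.mapRange_apply]

theorem alphaStar_apply_succ (ξ : ℕ →₀ M) (k : ℕ) :
    alphaStar t r ξ (k+1) = t (ξ (k+1)) + r (ξ k) := by
  simp [alphaStar, shiftF_apply_succ, Finsupp.mapRange_apply]

theorem alphaStar_comp_shiftF :
    (alphaStar t r).comp (shiftF) = (shiftF).comp (alphaStar t r) := by
  apply Finsupp.lhom_ext
  intro a m
  simp only [LinearMap.comp_apply]
  rw [shiftF_single, alphaStar_single, alphaStar_single, map_add, shiftF_single, shiftF_single]

theorem alphaStar_injective (htr : ∀ m, t m + r m = m) :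
    Function.Injective (alphaStar t r) := by
  rw [← LinearMap.ker_eq_bot, eq_bot_iff]
  intro ξ hξ
  simp only [LinearMap.mem_ker] at hξ
  have htm : ∀ m, t m = m - r m := fun m => eq_sub_of_add_eq (htr m)
  have head : t (ξ 0) = 0 := by
    have := congrArg (fun η : ℕ →₀ M => η 0) hξ
    simpa [alphaStar_apply_zero] using this
  have mid : ∀ k, t (ξ (k+1)) + r (ξ k) = 0 := by
    intro k
    have := congrArg (fun η : ℕ →₀ M => η (k+1)) hξ
    simpa [alphaStar_apply_succ] using this
  have h0' : ξ 0 = r (ξ 0) := by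
    have := head
    rw [htm] at this
    exact sub_eq_zero.mp this
  have hmid' : ∀ k, ξ (k+1) = r (ξ (k+1)) - r (ξ k) := by
    intro k
    have h1 := mid k
    rw [htm] at h1
    have h2 : (ξ (k+1) + r (ξ k)) - r (ξ (k+1)) = ξ (k+1) - r (ξ (k+1)) + r (ξ k) := by abel
    have h3 : (ξ (k+1) + r (ξ k)) - r (ξ (k+1)) = 0 := by rw [h2, h1]
    have h4 : ξ (k+1) + r (ξ k) = r (ξ (k+1)) := sub_eq_zero.mp h3
    exact eq_sub_of_add_eq h4
  have hbound : ∀ n : ℕ, ξ n = 0 := by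
    intro n
    set K := n + (ξ.support.sup id) + 1 with hK
    have hKnot : K ∉ ξ.support := by
      intro hKmem
      have := Finset.le_sup (f := id) hKmem
      simp only [id] at this
      omega
    have hK0 : ξ K = 0 := Finsupp.notMem_support_iff.mp hKnot
    have htop' : r (ξ K) = 0 := by rw [hK0, map_zero]
    exact rel_lemma r K ξ h0' (fun k _ => hmid' k) htop' n (by omega)
  rw [Submodule.mem_bot]
  ext n
  simp [hbound n]

end auxRad

set_option maxHeartbeats 2000000 in
/-- A reduced, projective, Rad-supplementing module has small radical. -/
theorem rad_small_of_reduced_projective_radSupplementing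
    (R : Type u) [Ring R] (M : Type v) [AddCommGroup M] [Module R M]
    [Module.Projective R M]
    (hred : ∀ U : Submodule R M, moduleRad R U = ⊤ → U = ⊥)
    (h : IsRadSupplementing R M) :
    ∀ T : Submodule R M, T ≠ ⊤ → moduleRad R M ⊔ T ≠ ⊤ := by
  intro T hT htop
  apply hT
  -- Step 1: produce t, r with t + r = id, range t ≤ T, range r ≤ Rad M.
  set Rad : Submodule R M := moduleRad R M with hRadDef
  let σ : (T × Rad) →ₗ[R] M :=
    T.subtype.comp (LinearMap.fst R T Rad) + Rad.subtype.comp (LinearMap.snd R T Rad)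
  have hσ : Function.Surjective σ := by
    intro x
    have hx : x ∈ Rad ⊔ T := by rw [htop]; trivial
    obtain ⟨y, hy, z, hz, hsum⟩ := Submodule.mem_sup.1 hx
    refine ⟨(⟨z, hz⟩, ⟨y, hy⟩), ?_⟩
    simp only [σ, LinearMap.add_apply, LinearMap.comp_apply, LinearMap.fst_apply,
      LinearMap.snd_apply, Submodule.coe_subtype]
    rw [add_comm]; exact hsum
  obtain ⟨g, hg⟩ := Module.projective_lifting_property σ (LinearMap.id : M →ₗ[R] M) hσ
  set t : M →ₗ[R] M := T.subtype.comp ((LinearMap.fst R T Rad).comp g) with htDef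
  set r : M →ₗ[R] M := Rad.subtype.comp ((LinearMap.snd R T Rad).comp g) with hrDef
  have htr : ∀ m, t m + r m = m := by
    intro m
    have := LinearMap.congr_fun hg m
    simpa [σ, t, r] using this
  have htmem : ∀ m, t m ∈ T := by
    intro m; simp only [t, LinearMap.comp_apply, Submodule.coe_subtype]; exact ((g m).1).2
  have hrmem : ∀ m, r m ∈ Rad := by
    intro m; simp only [r, LinearMap.comp_apply, Submodule.coe_subtype]; exact ((g m).2).2
  -- Step 2: the module C and the embedding f.
  set αs : (ℕ →₀ M) →ₗ[R] (ℕ →₀ M) := alphaStar t r with hαsDef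
  have hαinj : Function.Injective αs := alphaStar_injective t r htr
  set β : M →ₗ[R] ((ℕ →₀ M) ⧸ LinearMap.range αs) :=
    (LinearMap.range αs).mkQ.comp ((Finsupp.lsingle 0).comp r) with hβDef
  set f : M →ₗ[R] (M × ((ℕ →₀ M) ⧸ LinearMap.range αs)) := LinearMap.prod t β with hfDef
  have hfinj : Function.Injective f := by
    rw [← LinearMap.ker_eq_bot, eq_bot_iff]
    intro m hm
    simp only [LinearMap.mem_ker, f, LinearMap.prod_apply, Prod.mk_eq_zero, Function.prod] at hm
    obtain ⟨hm1, hm2⟩ := hm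
    have hm2' : Finsupp.single 0 (r m) ∈ LinearMap.range αs := by
      have : (LinearMap.range αs).mkQ (Finsupp.single 0 (r m)) = 0 := by
        simpa [β] using hm2
      rwa [Submodule.mkQ_apply, Submodule.Quotient.mk_eq_zero] at this
    obtain ⟨ξ, hξ⟩ := hm2'
    have hη : αs (Finsupp.single 0 m - shiftF (R := R) ξ) = 0 := by
      rw [map_sub]
      have h1 : αs (Finsupp.single 0 m) = Finsupp.single 1 (r m) := by
        rw [hαsDef, alphaStar_single, hm1]
        simp
      have h2 : αs (shiftF (R := R) ξ) = shiftF (R := R) (αs ξ) := LinearMap.congr_fun (alphaStar_comp_shiftF t r) ξ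
      rw [h1, h2, hξ, shiftF_single, sub_self]
    have hη0 : Finsupp.single 0 m - shiftF (R := R) ξ = 0 := by
      apply hαinj
      rw [hη, map_zero]
    have : Finsupp.single 0 m = shiftF (R := R) ξ := sub_eq_zero.mp hη0
    have := congrArg (fun η : ℕ →₀ M => η 0) this
    simpa [shiftF_apply_zero] using this
  -- Step 3: apply the Rad-supplementing hypothesis.
  obtain ⟨V, hV1, hV2⟩ :=
    h (ModuleCat.of R (M × ((ℕ →₀ M) ⧸ LinearMap.range αs))) f hfinj
  -- Step 4: covering facts.
  set C := (ℕ →₀ M) ⧸ LinearMap.range αs with hCDef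
  set ρ₁ : M →ₗ[R] (M × C) := LinearMap.inl R M C with hρ₁Def
  set ρ₂ : (ℕ →₀ M) →ₗ[R] (M × C) :=
    (LinearMap.inr R M C).comp (LinearMap.range αs).mkQ with hρ₂Def
  set SRad : Submodule R (ℕ →₀ M) :=
    ⨆ k : ℕ, Submodule.map (Finsupp.lsingle k : M →ₗ[R] (ℕ →₀ M)) Rad with hSRadDef
  have hSRad_le : SRad ≤ moduleRad R (ℕ →₀ M) := iSup_le fun k => map_moduleRad_le _
  have hsingle_rad : ∀ (a : ℕ) (m : M), m ∈ Rad → Finsupp.single a m ∈ SRad := by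
    intro a m hm
    refine (le_iSup (fun k => Submodule.map (Finsupp.lsingle k : M →ₗ[R] (ℕ →₀ M)) Rad) a) ?_
    exact ⟨m, hm, by simp⟩
  have claimF : ∀ ξ : (ℕ →₀ M), ξ ∈ LinearMap.range αs ⊔ SRad := by
    intro ξ
    induction ξ using Finsupp.induction with
    | zero => exact zero_mem _
    | single_add a b ξ' _ _ ih =>
      refine add_mem ?_ ih
      have hsab : Finsupp.single a b =
          αs (Finsupp.single a b) + Finsupp.single a (r b) - Finsupp.single (a+1) (r b) := by
        rw [hαsDef, alphaStar_single]
        have hb : Finsupp.single a b = Finsupp.single a (t b) + Finsupp.single a (r b) := by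
          rw [← Finsupp.single_add, htr b]
        nth_rewrite 1 [hb]
        abel
      rw [hsab]
      refine sub_mem (add_mem ?_ ?_) ?_
      · exact Submodule.mem_sup_left ⟨_, rfl⟩
      · exact Submodule.mem_sup_right (hsingle_rad a (r b) (hrmem b))
      · exact Submodule.mem_sup_right (hsingle_rad (a+1) (r b) (hrmem b))
  set Wc : Submodule R (M × C) :=
    Submodule.map ρ₁ Rad ⊔ Submodule.map ρ₂ (moduleRad R (ℕ →₀ M)) with hWcDef
  have hcov : ∀ n : M × C, n ∈ LinearMap.range f ⊔ Wc := by
    rintro ⟨x, c⟩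
    obtain ⟨ξ, rfl⟩ := Submodule.mkQ_surjective (LinearMap.range αs) c
    obtain ⟨u, hu, s, hs, hsum⟩ := Submodule.mem_sup.1 (claimF ξ)
    have hmk : (LinearMap.range αs).mkQ ξ = (LinearMap.range αs).mkQ s := by
      obtain ⟨ζ, rfl⟩ := hu
      rw [← hsum, map_add]
      have : (LinearMap.range αs).mkQ (αs ζ) = 0 := by
        rw [Submodule.mkQ_apply, Submodule.Quotient.mk_eq_zero]
        exact ⟨ζ, rfl⟩
      rw [this, zero_add]
    have hkey : (x, (LinearMap.range αs).mkQ ξ) =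
        f x + (ρ₁ (r x) + ρ₂ (s - Finsupp.single 0 (r x))) := by
      have h1 : f x = (t x, (LinearMap.range αs).mkQ (Finsupp.single 0 (r x))) := by
        simp [hfDef, hβDef]
      have h2 : ρ₁ (r x) = ((r x : M), (0 : C)) := by simp [hρ₁Def]
      have h3 : ρ₂ (s - Finsupp.single 0 (r x)) =
          ((0 : M), (LinearMap.range αs).mkQ s
            - (LinearMap.range αs).mkQ (Finsupp.single 0 (r x))) := by
        simp only [hρ₂Def, LinearMap.comp_apply, map_sub, LinearMap.inr_apply,
          Prod.mk_sub_mk, sub_zero]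
      rw [h1, h2, h3, Prod.mk_add_mk, Prod.mk_add_mk]
      refine Prod.ext ?_ ?_
      · simp [htr x]
      · simp only []
        rw [hmk]
        abel
    rw [hkey]
    refine add_mem (Submodule.mem_sup_left ⟨x, rfl⟩) (Submodule.mem_sup_right ?_)
    refine add_mem (Submodule.mem_sup_left ?_) (Submodule.mem_sup_right ?_)
    · exact ⟨r x, hrmem x, rfl⟩
    · refine ⟨s - Finsupp.single 0 (r x), ?_, rfl⟩
      exact sub_mem (hSRad_le hs) (hSRad_le (hsingle_rad 0 (r x) (hrmem x)))
  -- Step 5: every Rad-supplement is radical.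
  set π : (M × C) →ₗ[R] ((M × C) ⧸ LinearMap.range f) := (LinearMap.range f).mkQ with hπDef
  have hπsurj : Function.Surjective (π.comp V.subtype) := by
    intro q
    obtain ⟨n, rfl⟩ := Submodule.mkQ_surjective (LinearMap.range f) q
    have hn : n ∈ LinearMap.range f ⊔ V := by rw [hV1]; trivial
    obtain ⟨a, ha, v, hv, hsum⟩ := Submodule.mem_sup.1 hn
    refine ⟨⟨v, hv⟩, ?_⟩
    have : π a = 0 := by
      rw [hπDef, Submodule.mkQ_apply, Submodule.Quotient.mk_eq_zero]
      exact ha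
    calc π (V.subtype ⟨v, hv⟩) = π v := rfl
      _ = π a + π v := by rw [this, zero_add]
      _ = π n := by rw [← map_add, hsum]
  obtain ⟨h₁, hh₁⟩ :=
    Module.projective_lifting_property (π.comp V.subtype) (π.comp ρ₁) hπsurj
  have hh₂k : ∀ k : ℕ, ∃ hk : M →ₗ[R] V,
      (π.comp V.subtype).comp hk = (π.comp ρ₂).comp (Finsupp.lsingle k) := by
    intro k
    exact Module.projective_lifting_property (π.comp V.subtype)
      ((π.comp ρ₂).comp (Finsupp.lsingle k)) hπsurj
  choose h₂k hh₂ using hh₂k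
  set h₂ : (ℕ →₀ M) →ₗ[R] V := Finsupp.lsum ℕ h₂k with hh₂Def
  have hh₂' : (π.comp V.subtype).comp h₂ = π.comp ρ₂ := by
    apply Finsupp.lhom_ext
    intro a m
    have : h₂ (Finsupp.single a m) = h₂k a m := by simp [hh₂Def]
    rw [LinearMap.comp_apply, this]
    have := LinearMap.congr_fun (hh₂ a) m
    simpa using this
  have hVrad : V ≤ Submodule.map V.subtype (moduleRad R V) := by
    intro v hv
    obtain ⟨a, ha, w, hw, hsum⟩ := Submodule.mem_sup.1 (hcov v)
    obtain ⟨w₁, hw₁, w₂, hw₂, hwsum⟩ := Submodule.mem_sup.1 hw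
    obtain ⟨p₁, hp₁, rfl⟩ := hw₁
    obtain ⟨p₂, hp₂, rfl⟩ := hw₂
    set uu : V := h₁ p₁ + h₂ p₂ with huu
    have huurad : uu ∈ moduleRad R V := by
      refine add_mem ?_ ?_
      · exact map_moduleRad_le h₁ ⟨p₁, hp₁, rfl⟩
      · exact map_moduleRad_le h₂ ⟨p₂, hp₂, rfl⟩
    have hπuu : π (V.subtype uu) = π (ρ₁ p₁ + ρ₂ p₂) := by
      rw [huu, map_add, map_add]
      have e1 : π (V.subtype (h₁ p₁)) = π (ρ₁ p₁) := by
        have := LinearMap.congr_fun hh₁ p₁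
        simpa using this
      have e2 : π (V.subtype (h₂ p₂)) = π (ρ₂ p₂) := by
        have := LinearMap.congr_fun hh₂' p₂
        simpa using this
      rw [map_add, e1, e2]
    have hdiff : v - V.subtype uu ∈ LinearMap.range f := by
      have hπv : π v = π (V.subtype uu) := by
        have hπa : π a = 0 := by
          rw [hπDef, Submodule.mkQ_apply, Submodule.Quotient.mk_eq_zero]
          exact ha
        rw [hπuu, hwsum]
        calc π v = π (a + w) := by rw [hsum]
          _ = π a + π w := map_add _ _ _
          _ = π w := by rw [hπa, zero_add]
      have : π (v - V.subtype uu) = 0 := by rw [map_sub, hπv, sub_self]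
      rwa [hπDef, Submodule.mkQ_apply, Submodule.Quotient.mk_eq_zero] at this
    have hdiffV : v - V.subtype uu ∈ V := sub_mem hv uu.2
    have hmem := hV2 ⟨hdiff, hdiffV⟩
    have huumem : V.subtype uu ∈ Submodule.map V.subtype (moduleRad R V) :=
      Submodule.mem_map_of_mem huurad
    have := add_mem huumem hmem
    simpa using this
  have hVtop : moduleRad R V = ⊤ := by
    have hmapeq : Submodule.map V.subtype (moduleRad R V) = Submodule.map V.subtype ⊤ := by
      rw [Submodule.map_subtype_top]
      exact le_antisymm (Submodule.map_subtype_le V _) hVrad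
    exact Submodule.map_injective_of_injective (Submodule.injective_subtype V) hmapeq
  -- Step 6: the first projection of V is a radical submodule of M, hence ⊥.
  set φ : V →ₗ[R] M := (LinearMap.fst R M C).comp V.subtype with hφDef
  have hφrange : moduleRad R (LinearMap.range φ) = ⊤ := by
    refine moduleRad_eq_top_of_surjective φ.rangeRestrict
      (LinearMap.surjective_rangeRestrict φ) hVtop
  have hφbot : LinearMap.range φ = ⊥ := hred _ hφrange
  have hfstV : ∀ v : M × C, v ∈ V → v.1 = 0 := by
    intro v hv
    have : φ ⟨v, hv⟩ ∈ LinearMap.range φ := ⟨⟨v, hv⟩, rfl⟩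
    rw [hφbot, Submodule.mem_bot] at this
    exact this
  -- Step 7: conclude T = ⊤.
  rw [eq_top_iff]
  intro x _
  have hx : ((x, 0) : M × C) ∈ LinearMap.range f ⊔ V := by rw [hV1]; trivial
  obtain ⟨a, ha, v, hv, hsum⟩ := Submodule.mem_sup.1 hx
  obtain ⟨m, rfl⟩ := ha
  have h1 : (f m).1 + v.1 = x := by
    have := congrArg Prod.fst hsum
    simpa using this
  have h2 : v.1 = 0 := hfstV v hv
  have h3 : (f m).1 = t m := by simp [hfDef]
  rw [h2, add_zero, h3] at h1
  rw [← h1]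
  exact htmem m
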